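/- Assume R is complete and that E_S is T-torsion-free (Nil(E_S) = 0). Then an ideal L ⊆ R containing I is an E_S-ideal if and only if LS is an E_S-special ideal of S. -/

import Mathlib

open IsLocalRing

/-- The `q`-th Frobenius power of an ideal: the ideal generated by `q`-th powers of elements. -/
def Ideal.frobPow {R : Type*} [CommSemiring R] (q : ℕ) (I : Ideal R) : Ideal R :=
  Ideal.span ((fun a => a ^ q) '' (I : Set R))

/-- A `q`-Frobenius map on a module `M`: additive, with `ψ (r • x) = r ^ q • ψ x`. -/
structure FrobeniusMap (R : Type*) [CommSemiring R] (M : Type*) [AddCommMonoid M]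
    [Module R M] (q : ℕ) where
  toFun : M → M
  map_add' : ∀ x y, toFun (x + y) = toFun x + toFun y
  map_smul' : ∀ (r : R) (x : M), toFun (r • x) = r ^ q • toFun x

/-- `E` is an injective hull of the residue field of the local ring `R`. -/
def IsInjectiveHullOfResidueField (R : Type*) [CommRing R] [IsLocalRing R]
    (E : Type*) [AddCommGroup E] [Module R E] : Prop :=
  Module.Injective R E ∧
    ∃ ι : ResidueField R →ₗ[R] E, Function.Injective ι ∧
      ∀ N : Submodule R E, N ≠ ⊥ → ∃ x, x ≠ 0 ∧ x ∈ N ∧ x ∈ LinearMap.range ι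

/-- Regularity for a Noetherian local ring: the maximal ideal is generated by
`dim R` elements. -/
def IsRegularLocal (R : Type*) [CommRing R] [IsLocalRing R] : Prop :=
  ∃ (n : ℕ) (x : Fin n → R), maximalIdeal R = Ideal.span (Set.range x) ∧
    ringKrullDim R = n

/-- `φ` is (up to normalization) the natural Frobenius on `E = E_R(R/m)`: every `e`-th
Frobenius map on `E` is uniquely of the form `u • φ^[e]`. -/
def IsNaturalFrobenius {R : Type*} [CommRing R] (p : ℕ) (E : Type*) [AddCommGroup E]
    [Module R E] (φ : FrobeniusMap R E p) : Prop :=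
  ∀ e : ℕ, 1 ≤ e → ∀ θ : FrobeniusMap R E (p ^ e),
    ∃! u : R, ∀ x : E, θ.toFun x = u • (φ.toFun)^[e] x

/-- The annihilator of an ideal `I` inside a module `E`, as a submodule of `E`. -/
def annIn {R : Type*} [CommRing R] (I : Ideal R) (E : Type*) [AddCommGroup E]
    [Module R E] : Submodule R E where
  carrier := { x | ∀ a ∈ I, a • x = 0 }
  add_mem' hx hy := fun a ha => by rw [smul_add, hx a ha, hy a ha, add_zero]
  zero_mem' := fun a _ => smul_zero a
  smul_mem' := fun r x hx a ha => by rw [smul_comm, hx a ha, smul_zero]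

/-- `ν_e = 1 + p + ⋯ + p^{e-1}`. -/
def nuExp (p e : ℕ) : ℕ := ∑ i ∈ Finset.range e, p ^ i

section Aux

variable {R : Type u} [CommRing R] [IsLocalRing R]
variable {E : Type v} [AddCommGroup E] [Module R E]

structure St16Setup (R : Type u) [CommRing R] [IsLocalRing R] (E : Type v)
    [AddCommGroup E] [Module R E] where
  inj : Module.Injective R E
  small : Small.{v} R
  s : E
  s_ne : s ≠ 0
  s_ann : ∀ a ∈ maximalIdeal R, a • s = 0
  s_mem : ∀ N : Submodule R E, N ≠ ⊥ → s ∈ N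

namespace St16Setup

theorem mapOut (h : St16Setup R E) {Q : Type*} [AddCommGroup Q] [Module R Q] {z : Q} (hz : z ≠ 0) :
    ∃ f : Q →ₗ[R] E, f z = h.s := by
  classical
  letI := h.small
  letI := h.inj
  set T := LinearMap.toSpanSingleton R Q z with hT
  have hker : LinearMap.ker T ≤ maximalIdeal R := by
    apply le_maximalIdeal
    intro htop
    have h1 : (1 : R) ∈ LinearMap.ker T := htop ▸ trivial
    rw [LinearMap.mem_ker, hT, LinearMap.toSpanSingleton_apply_one] at h1
    exact hz h1
  have hker2 : LinearMap.ker T ≤ LinearMap.ker (LinearMap.toSpanSingleton R E h.s) := by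
    intro a ha
    rw [LinearMap.mem_ker, LinearMap.toSpanSingleton_apply]
    exact h.s_ann a (hker ha)
  set q : (R ⧸ LinearMap.ker T) →ₗ[R] E :=
    Submodule.liftQ (LinearMap.ker T) (LinearMap.toSpanSingleton R E h.s) hker2 with hq
  set e := T.quotKerEquivRange with he
  obtain ⟨F, hF⟩ := Module.Injective.extension_property R E (LinearMap.range T) Q
    (LinearMap.range T).subtype (Submodule.injective_subtype _)
    (q ∘ₗ e.symm.toLinearMap)
  have hzmem : z ∈ LinearMap.range T := ⟨1, LinearMap.toSpanSingleton_apply_one R Q z⟩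
  refine ⟨F, ?_⟩
  have h2 : F z = (q ∘ₗ e.symm.toLinearMap) ⟨z, hzmem⟩ := by
    have := LinearMap.congr_fun hF ⟨z, hzmem⟩
    simpa using this
  rw [h2]
  have h3 : e (Submodule.Quotient.mk 1) = ⟨z, hzmem⟩ := by
    apply Subtype.ext
    rw [he]
    rw [T.quotKerEquivRange_apply_mk]
    exact LinearMap.toSpanSingleton_apply_one R Q z
  have h4 : e.symm ⟨z, hzmem⟩ = Submodule.Quotient.mk 1 := by
    rw [← h3, LinearEquiv.symm_apply_apply]
  simp only [LinearMap.comp_apply, LinearEquiv.coe_toLinearMap, h4, hq]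
  rw [Submodule.liftQ_apply, LinearMap.toSpanSingleton_apply_one]

theorem sep (h : St16Setup R E) {V : Submodule R E} {x : E} (hx : x ∉ V) :
    ∃ g : E →ₗ[R] E, (∀ v ∈ V, g v = 0) ∧ g x = h.s := by
  have hz : (Submodule.Quotient.mk x : E ⧸ V) ≠ 0 := by
    simp only [ne_eq, Submodule.Quotient.mk_eq_zero]; exact hx
  obtain ⟨f, hf⟩ := h.mapOut hz
  refine ⟨f ∘ₗ V.mkQ, fun v hv => ?_, ?_⟩
  · simp only [LinearMap.comp_apply, Submodule.mkQ_apply]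
    rw [(Submodule.Quotient.mk_eq_zero V).mpr hv, map_zero]
  · simpa using hf

theorem ann_annIn (h : St16Setup R E) (J : Ideal R) : (annIn J E).annihilator = J := by
  apply le_antisymm
  · intro r hr
    by_contra hrJ
    have hz : (Submodule.Quotient.mk r : R ⧸ J) ≠ 0 := by
      simp only [ne_eq, Submodule.Quotient.mk_eq_zero]; exact hrJ
    obtain ⟨f, hf⟩ := h.mapOut hz
    have hxmem : f (Submodule.Quotient.mk 1) ∈ annIn J E := by
      intro a ha
      rw [← map_smul, ← Submodule.Quotient.mk_smul, smul_eq_mul, mul_one,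
        (Submodule.Quotient.mk_eq_zero J).mpr ha, map_zero]
    have := Submodule.mem_annihilator.mp hr _ hxmem
    rw [← map_smul, ← Submodule.Quotient.mk_smul, smul_eq_mul, mul_one, hf] at this
    exact h.s_ne this
  · intro r hr
    exact Submodule.mem_annihilator.mpr fun x hx => hx r hr

theorem socle (h : St16Setup R E) {x : E} (hx : ∀ a ∈ maximalIdeal R, a • x = 0) :
    ∃ c : R, x = c • h.s := by
  rcases eq_or_ne x 0 with rfl | hx0
  · exact ⟨0, by rw [zero_smul]⟩
  · have hN : (R ∙ x) ≠ ⊥ := by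
      simpa only [ne_eq, Submodule.span_singleton_eq_bot] using hx0
    obtain ⟨r, hr⟩ := Submodule.mem_span_singleton.mp (h.s_mem _ hN)
    have hru : IsUnit r := by
      by_contra hru
      have : r ∈ maximalIdeal R := hru
      rw [hx r this] at hr
      exact h.s_ne hr.symm
    obtain ⟨u, rfl⟩ := hru
    refine ⟨(↑u⁻¹ : Rˣ), ?_⟩
    rw [← hr, smul_smul, Units.inv_mul, one_smul]

theorem torsion [IsNoetherianRing R] (h : St16Setup R E) (x : E) :
    ∃ n : ℕ, ∀ a ∈ (maximalIdeal R) ^ n, a • x = 0 := by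
  classical
  let J : Ideal R := LinearMap.ker (LinearMap.toSpanSingleton R E x)
  have hmemJ : ∀ a : R, a ∈ J ↔ a • x = 0 := fun a => by
    simp [J, LinearMap.mem_ker]
  have hrad : maximalIdeal R ≤ J.radical := by
    by_contra hcon
    rw [SetLike.le_def] at hcon
    push_neg at hcon
    obtain ⟨a, ham, hanot⟩ := hcon
    have hak : ∀ k : ℕ, a ^ k • x ≠ 0 := fun k hk =>
      hanot (Ideal.mem_radical_iff.mpr ⟨k, (hmemJ _).mpr hk⟩)
    have hs_mem : ∀ k : ℕ, ∃ r : R, (r * a ^ k) • x = h.s := by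
      intro k
      have hN : (R ∙ (a ^ k • x)) ≠ ⊥ := by
        simpa only [ne_eq, Submodule.span_singleton_eq_bot] using hak k
      obtain ⟨r, hr⟩ := Submodule.mem_span_singleton.mp (h.s_mem _ hN)
      exact ⟨r, by rw [mul_smul]; exact hr⟩
    choose t ht using hs_mem
    let I : Ideal R := Ideal.span {a}
    have hItop : I ≠ ⊤ := by
      intro htop
      have h1 : (1 : R) ∈ I := htop ▸ trivial
      rw [Ideal.mem_span_singleton] at h1
      obtain ⟨b, hb⟩ := h1
      have h2 : (1 : R) ∈ maximalIdeal R := hb ▸ Ideal.mul_mem_right b _ ham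
      exact (maximalIdeal.isMaximal R).ne_top
        (Ideal.eq_top_of_unit_mem _ _ 1 h2 (mul_one 1))
    have hKrull := Ideal.iInf_pow_smul_eq_bot_of_isLocalRing
      (R := R) (M := R ⧸ J) (I := I) hItop
    have hmk : ∀ k : ℕ, (Submodule.Quotient.mk (t 0 * a ^ 0) : R ⧸ J)
        ∈ (I ^ k • ⊤ : Submodule R (R ⧸ J)) := by
      intro k
      have hJk : t 0 * a ^ 0 - t k * a ^ k ∈ J := by
        rw [hmemJ, sub_smul, ht, ht]
        exact sub_self _
      have heq : (Submodule.Quotient.mk (t 0 * a ^ 0) : R ⧸ J)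
          = Submodule.Quotient.mk (t k * a ^ k) := (Submodule.Quotient.eq J).mpr hJk
      rw [heq]
      have h1 : (Submodule.Quotient.mk (t k * a ^ k) : R ⧸ J)
          = (t k) • (a ^ k • (Submodule.Quotient.mk 1 : R ⧸ J)) := by
        simp only [← Submodule.Quotient.mk_smul, smul_eq_mul, mul_one, mul_assoc]
      rw [h1]
      exact Submodule.smul_mem _ _
        (Submodule.smul_mem_smul (Ideal.pow_mem_pow (Ideal.mem_span_singleton_self a) k)
          Submodule.mem_top)
    have hbot : (Submodule.Quotient.mk (t 0 * a ^ 0) : R ⧸ J) = 0 := by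
      have : (Submodule.Quotient.mk (t 0 * a ^ 0) : R ⧸ J)
          ∈ (⨅ i : ℕ, I ^ i • ⊤ : Submodule R (R ⧸ J)) := (Submodule.mem_iInf _).mpr hmk
      rw [hKrull] at this
      exact (Submodule.mem_bot R).mp this
    rw [Submodule.Quotient.mk_eq_zero, hmemJ] at hbot
    rw [ht 0] at hbot
    exact h.s_ne hbot
  obtain ⟨n, hn⟩ := Ideal.exists_pow_le_of_le_radical_of_fg hrad
    (IsNoetherian.noetherian (maximalIdeal R))
  exact ⟨n, fun a ha => (hmemJ a).mp (hn ha)⟩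

set_option maxHeartbeats 1000000 in
theorem step [IsNoetherianRing R] (h : St16Setup R E) (n : ℕ) (g : E →ₗ[R] E)
    (hg : ∀ x ∈ annIn ((maximalIdeal R) ^ n) E, g x = 0) :
    ∃ ρ : R, ∀ x ∈ annIn ((maximalIdeal R) ^ (n + 1)) E, g x = ρ • x := by
  classical
  set k := ResidueField R with hk
  set A : Submodule R E := annIn ((maximalIdeal R) ^ (n + 1)) E with hA
  set B' : Submodule R A := Submodule.comap A.subtype (annIn ((maximalIdeal R) ^ n) E) with hB'
  -- torsion instances
  have hQtor : Module.IsTorsionBySet R (A ⧸ B') ((maximalIdeal R : Ideal R) : Set R) := by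
    intro x a
    obtain ⟨y, rfl⟩ := Submodule.Quotient.mk_surjective _ x
    rw [← Submodule.Quotient.mk_smul, Submodule.Quotient.mk_eq_zero]
    intro b hb
    show b • ((a : R) • (y : E)) = 0
    rw [smul_smul]
    exact y.2 (b * (a : R))
      ((pow_succ (maximalIdeal R) n) ▸ Ideal.mul_mem_mul hb a.2)
  have hE1tor : Module.IsTorsionBySet R (annIn (maximalIdeal R) E)
      ((maximalIdeal R : Ideal R) : Set R) := by
    intro x a
    exact Subtype.ext (x.2 (a : R) a.2)
  letI : Module k (A ⧸ B') := hQtor.module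
  letI : Module k (annIn (maximalIdeal R) E) := hE1tor.module
  letI : IsScalarTower R k (A ⧸ B') := hQtor.isScalarTower
  letI : IsScalarTower R k (annIn (maximalIdeal R) E) := hE1tor.isScalarTower
  have hsurj : Function.Surjective (algebraMap R k) := Ideal.Quotient.mk_surjective
  have halgQ : ∀ (r : R) (q : A ⧸ B'), (algebraMap R k r) • q = r • q := fun r q => rfl
  have halg : ∀ (r : R) (y : annIn (maximalIdeal R) E),
      (algebraMap R k r) • y = r • y := fun r y => rfl
  -- multiplication maps
  have hmul_mem : ∀ {ρ : R}, ρ ∈ (maximalIdeal R) ^ n → ∀ (y : A), ∀ b ∈ maximalIdeal R,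
      b • (ρ • (y : E)) = 0 := by
    intro ρ hρ y b hb
    rw [smul_smul]
    exact y.2 (b * ρ) ((pow_succ' (maximalIdeal R) n) ▸ Ideal.mul_mem_mul hb hρ)
  let PR : (ρ : R) → ρ ∈ (maximalIdeal R) ^ n → (A →ₗ[R] annIn (maximalIdeal R) E) :=
    fun ρ hρ =>
    { toFun := fun y => ⟨ρ • (y : E), fun b hb => hmul_mem hρ y b hb⟩
      map_add' := fun y z => Subtype.ext (by simp [smul_add])
      map_smul' := fun r y => Subtype.ext (by simp [smul_smul, mul_comm]) }
  have hPRker : ∀ (ρ : R) (hρ : ρ ∈ (maximalIdeal R) ^ n), B' ≤ LinearMap.ker (PR ρ hρ) := by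
    intro ρ hρ y hy
    rw [LinearMap.mem_ker]
    exact Subtype.ext (hy ρ hρ)
  let PQ : (ρ : R) → ρ ∈ (maximalIdeal R) ^ n →
      ((A ⧸ B') →ₗ[R] annIn (maximalIdeal R) E) :=
    fun ρ hρ => Submodule.liftQ B' (PR ρ hρ) (hPRker ρ hρ)
  let Pk : (ρ : R) → ρ ∈ (maximalIdeal R) ^ n →
      ((A ⧸ B') →ₗ[k] annIn (maximalIdeal R) E) :=
    fun ρ hρ => (PQ ρ hρ).extendScalarsOfSurjective hsurj
  -- the map induced by g
  have hgmem : ∀ (y : A), ∀ b ∈ maximalIdeal R, b • (g (y : E)) = 0 := by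
    intro y b hb
    rw [← map_smul]
    apply hg
    intro c hc
    rw [smul_smul]
    exact y.2 (c * b) ((pow_succ (maximalIdeal R) n) ▸ Ideal.mul_mem_mul hc hb)
  let GR : A →ₗ[R] annIn (maximalIdeal R) E :=
    { toFun := fun y => ⟨g (y : E), fun b hb => hgmem y b hb⟩
      map_add' := fun y z => Subtype.ext (by simp)
      map_smul' := fun r y => Subtype.ext (by simp) }
  have hGRker : B' ≤ LinearMap.ker GR := by
    intro y hy
    rw [LinearMap.mem_ker]
    exact Subtype.ext (hg _ hy)
  let GQ : (A ⧸ B') →ₗ[R] annIn (maximalIdeal R) E := Submodule.liftQ B' GR hGRker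
  let Gk : (A ⧸ B') →ₗ[k] annIn (maximalIdeal R) E := GQ.extendScalarsOfSurjective hsurj
  -- the socle is one-dimensional
  let s' : annIn (maximalIdeal R) E := ⟨h.s, fun a ha => h.s_ann a ha⟩
  let ts : k →ₗ[k] annIn (maximalIdeal R) E := LinearMap.toSpanSingleton k _ s'
  have hts0 : ∀ c : k, ts c = 0 → c = 0 := by
    intro c hc
    obtain ⟨r, rfl⟩ := hsurj c
    have h1 : r • s' = 0 := by
      rw [← halg r s']
      exact hc
    have h2 : r • h.s = 0 := congrArg Subtype.val h1
    have hrm : r ∈ maximalIdeal R := by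
      by_contra hrm
      have hru : IsUnit r := by
        by_contra hru
        exact hrm hru
      obtain ⟨u, rfl⟩ := hru
      have := congrArg (fun z => (↑u⁻¹ : R) • z) h2
      simp only [smul_smul, Units.inv_mul, one_smul, smul_zero] at this
      exact h.s_ne this
    exact (Ideal.Quotient.eq_zero_iff_mem).mpr hrm
  have hts_bij : Function.Bijective ts := by
    constructor
    · intro c c' hcc'
      have := hts0 (c - c') (by rw [map_sub, hcc', sub_self])
      exact sub_eq_zero.mp this
    · intro y
      obtain ⟨c, hc⟩ := h.socle (fun a ha => y.2 a ha)
      refine ⟨algebraMap R k c, Subtype.ext ?_⟩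
      show ((algebraMap R k c • s' : annIn (maximalIdeal R) E) : E) = (y : E)
      rw [halg]
      exact hc.symm
  let e1 : k ≃ₗ[k] annIn (maximalIdeal R) E := LinearEquiv.ofBijective ts hts_bij
  -- the subspace of "multiplication" functionals
  let lam : (ρ : R) → ρ ∈ (maximalIdeal R) ^ n → Module.Dual k (A ⧸ B') :=
    fun ρ hρ => e1.symm.toLinearMap ∘ₗ Pk ρ hρ
  have hlam_eval : ∀ (ρ : R) (hρ : ρ ∈ (maximalIdeal R) ^ n) (y : A),
      lam ρ hρ (Submodule.Quotient.mk y)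
        = e1.symm ⟨ρ • (y : E), fun b hb => hmul_mem hρ y b hb⟩ :=
    fun ρ hρ y => rfl
  let W : Submodule k (Module.Dual k (A ⧸ B')) :=
    { carrier := {f | ∃ (ρ : R) (hρ : ρ ∈ (maximalIdeal R) ^ n), f = lam ρ hρ}
      zero_mem' := by
        refine ⟨0, zero_mem _, ?_⟩
        apply LinearMap.ext
        intro q
        obtain ⟨y, rfl⟩ := Submodule.Quotient.mk_surjective _ q
        rw [hlam_eval 0 (zero_mem _) y]
        simp only [LinearMap.zero_apply]
        exact ((LinearEquiv.map_eq_zero_iff e1.symm).mpr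
          (Subtype.ext (zero_smul R (y : E)))).symm
      add_mem' := by
        rintro f1 f2 ⟨ρ1, hρ1, rfl⟩ ⟨ρ2, hρ2, rfl⟩
        refine ⟨ρ1 + ρ2, add_mem hρ1 hρ2, ?_⟩
        apply LinearMap.ext
        intro q
        obtain ⟨y, rfl⟩ := Submodule.Quotient.mk_surjective _ q
        rw [LinearMap.add_apply, hlam_eval ρ1 hρ1 y, hlam_eval ρ2 hρ2 y,
          hlam_eval (ρ1 + ρ2) (add_mem hρ1 hρ2) y, ← map_add]
        exact congrArg e1.symm (Subtype.ext (add_smul ρ1 ρ2 (y : E)).symm)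
      smul_mem' := by
        rintro c f ⟨ρ, hρ, rfl⟩
        obtain ⟨r, rfl⟩ := hsurj c
        refine ⟨r * ρ, Ideal.mul_mem_left _ r hρ, ?_⟩
        apply LinearMap.ext
        intro q
        obtain ⟨y, rfl⟩ := Submodule.Quotient.mk_surjective _ q
        rw [LinearMap.smul_apply, hlam_eval ρ hρ y,
          hlam_eval (r * ρ) (Ideal.mul_mem_left _ r hρ) y, ← map_smul]
        refine congrArg e1.symm (Subtype.ext ?_)
        show ((algebraMap R k r • (⟨ρ • (y : E), _⟩ : annIn (maximalIdeal R) E) :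
          annIn (maximalIdeal R) E) : E) = (r * ρ) • (y : E)
        rw [halg]
        show r • (ρ • (y : E)) = (r * ρ) • (y : E)
        rw [mul_smul] }
  -- finite dimensionality
  letI : FiniteDimensional k (annIn (maximalIdeal R) E) := Module.Finite.equiv e1
  obtain ⟨d, aa, haa⟩ :=
    Submodule.fg_iff_exists_fin_generating_family.mp
      (IsNoetherian.noetherian ((maximalIdeal R) ^ n))
  have haamem : ∀ i : Fin d, aa i ∈ (maximalIdeal R) ^ n := fun i =>
    haa ▸ Submodule.subset_span ⟨i, rfl⟩
  let Θ : (A ⧸ B') →ₗ[k] (Fin d → annIn (maximalIdeal R) E) :=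
    LinearMap.pi (fun i => Pk (aa i) (haamem i))
  have hspan_smul : ∀ (y : A), (∀ i : Fin d, aa i • (y : E) = 0) →
      ∀ b ∈ (maximalIdeal R) ^ n, b • (y : E) = 0 := by
    intro y hy b hb
    rw [← haa] at hb
    induction hb using Submodule.span_induction with
    | mem c hc => obtain ⟨i, rfl⟩ := hc; exact hy i
    | zero => rw [zero_smul]
    | add c1 c2 _ _ h1 h2 => rw [add_smul, h1, h2, add_zero]
    | smul r c _ hc => rw [smul_eq_mul, mul_smul, hc, smul_zero]
  have hΘinj : Function.Injective Θ := by
    rw [← LinearMap.ker_eq_bot, eq_bot_iff]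
    intro q hq
    rw [LinearMap.mem_ker] at hq
    obtain ⟨y, rfl⟩ := Submodule.Quotient.mk_surjective _ q
    rw [Submodule.mem_bot, Submodule.Quotient.mk_eq_zero]
    intro b hb
    refine hspan_smul y (fun i => ?_) b hb
    have h2 : (⟨aa i • (y : E), fun b hb => hmul_mem (haamem i) y b hb⟩ :
        annIn (maximalIdeal R) E) = 0 := by
      have := congrFun (congrArg (fun z => (z : Fin d → annIn (maximalIdeal R) E)) hq) i
      exact this
    exact congrArg Subtype.val h2
  letI : FiniteDimensional k (A ⧸ B') := FiniteDimensional.of_injective Θ hΘinj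
  -- W separates points, hence W = ⊤
  have hcoann : W.dualCoannihilator = ⊥ := by
    rw [eq_bot_iff]
    intro q hq
    rw [Submodule.mem_dualCoannihilator] at hq
    obtain ⟨y, rfl⟩ := Submodule.Quotient.mk_surjective _ q
    rw [Submodule.mem_bot, Submodule.Quotient.mk_eq_zero]
    intro b hb
    have h1 := hq (lam b hb) ⟨b, hb, rfl⟩
    rw [hlam_eval b hb y] at h1
    have h2 : (⟨b • (y : E), fun c hc => hmul_mem hb y c hc⟩ :
        annIn (maximalIdeal R) E) = 0 :=
      (LinearEquiv.map_eq_zero_iff e1.symm).mp h1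
    exact congrArg Subtype.val h2
  have hWtop : W = ⊤ := by
    have h1 := Subspace.finrank_add_finrank_dualCoannihilator_eq W
    rw [hcoann, finrank_bot, add_zero] at h1
    apply Submodule.eq_top_of_finrank_eq
    rw [h1, Subspace.dual_finrank_eq]
  have hGmem : e1.symm.toLinearMap ∘ₗ Gk ∈ W := hWtop ▸ Submodule.mem_top
  obtain ⟨ρ, hρ, heq⟩ := hGmem
  refine ⟨ρ, fun x hx => ?_⟩
  have h3 := LinearMap.congr_fun heq (Submodule.Quotient.mk (⟨x, hx⟩ : A))
  have h4 : e1.symm (GR ⟨x, hx⟩) = e1.symm (PR ρ hρ ⟨x, hx⟩) := h3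
  have h5 := e1.symm.injective h4
  exact congrArg Subtype.val h5

theorem scalar_on [IsNoetherianRing R] (h : St16Setup R E) (n : ℕ) (g : E →ₗ[R] E) :
    ∃ r : R, ∀ x ∈ annIn ((maximalIdeal R) ^ n) E, g x = r • x := by
  induction n with
  | zero =>
    refine ⟨0, fun x hx => ?_⟩
    have hx0 : x = 0 := by
      have h1 := hx 1 (by rw [pow_zero, Ideal.one_eq_top]; exact Submodule.mem_top)
      rwa [one_smul] at h1
    rw [hx0, map_zero, smul_zero]
  | succ n ih =>
    obtain ⟨r, hr⟩ := ih
    obtain ⟨ρ, hρ⟩ := h.step n (g - r • LinearMap.id) (fun x hx => by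
      rw [LinearMap.sub_apply, LinearMap.smul_apply, LinearMap.id_apply, hr x hx, sub_self])
    refine ⟨r + ρ, fun x hx => ?_⟩
    have h1 := hρ x hx
    rw [LinearMap.sub_apply, LinearMap.smul_apply, LinearMap.id_apply, sub_eq_iff_eq_add] at h1
    rw [h1, add_smul, add_comm]

theorem scalar [IsNoetherianRing R] (h : St16Setup R E)
    (hcomp : IsAdicComplete (maximalIdeal R) R) (g : E →ₗ[R] E) :
    ∃ r : R, ∀ x : E, g x = r • x := by
  choose f hf using fun n => h.scalar_on n g
  have hsub : ∀ m : ℕ, ((maximalIdeal R) ^ m • ⊤ : Submodule R R) = (maximalIdeal R) ^ m := by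
    intro m
    rw [smul_eq_mul, ← Ideal.one_eq_top, mul_one]
  have hcoh : ∀ {m n' : ℕ}, m ≤ n' →
      f m ≡ f n' [SMOD ((maximalIdeal R) ^ m • ⊤ : Submodule R R)] := by
    intro m n' hmn
    rw [SModEq.sub_mem, hsub m, ← h.ann_annIn ((maximalIdeal R) ^ m),
      Submodule.mem_annihilator]
    intro x hx
    have h1 := hf m x hx
    have h2 := hf n' x (fun a ha => hx a (Ideal.pow_le_pow_right hmn ha))
    rw [sub_smul, ← h1, ← h2, sub_self]
  obtain ⟨L, hL⟩ := IsPrecomplete.prec hcomp.toIsPrecomplete (fun {m n'} => hcoh)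
  refine ⟨L, fun x => ?_⟩
  obtain ⟨n, hn⟩ := h.torsion x
  have h2 : f n - L ∈ (maximalIdeal R) ^ n := by
    have h3 := hL n
    rwa [SModEq.sub_mem, hsub n] at h3
  have h3 : (f n - L) • x = 0 := hn _ h2
  rw [sub_smul, sub_eq_zero] at h3
  rw [hf n x hn, h3]

theorem sub_matlis [IsNoetherianRing R] (h : St16Setup R E)
    (hcomp : IsAdicComplete (maximalIdeal R) R) (M : Submodule R E) :
    annIn M.annihilator E = M := by
  apply le_antisymm
  · intro x hx
    by_contra hxM
    obtain ⟨g, hg0, hgx⟩ := h.sep hxM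
    obtain ⟨r, hr⟩ := h.scalar hcomp g
    have hrann : r ∈ M.annihilator :=
      Submodule.mem_annihilator.mpr (fun v hv => by rw [← hr v, hg0 v hv])
    have h1 : g x = 0 := by rw [hr x, hx r hrann]
    exact h.s_ne (by rw [← hgx, h1])
  · intro x hxM a ha
    exact Submodule.mem_annihilator.mp ha x hxM

end St16Setup

theorem st16_main {R : Type u} [CommRing R] [IsLocalRing R] [IsNoetherianRing R]
    {E : Type v} [AddCommGroup E] [Module R E]
    (hcomp : IsAdicComplete (maximalIdeal R) R)
    (hE : IsInjectiveHullOfResidueField R E)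
    (hfaith : ∀ r : R, (∀ x : E, r • x = 0) → r = 0)
    (T : E → E) (I L : Ideal R) (hL : I ≤ L) :
    (∀ x ∈ annIn L E, T x ∈ annIn L E) ↔
      ∃ M : Submodule R E, M ≤ annIn I E ∧ (∀ x ∈ M, T x ∈ M) ∧
        L = M.annihilator := by
  classical
  obtain ⟨hinj, ι, hι, hess⟩ := hE
  have hsmall : Small.{v} R := small_of_injective
    (f := fun r : R => (fun x : E => r • x)) (by
      intro r r' hrr'
      have h1 : ∀ x : E, (r - r') • x = 0 := fun x => by
        have h2 : r • x = r' • x := congrFun hrr' x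
        rw [sub_smul, h2, sub_self]
      exact sub_eq_zero.mp (hfaith _ h1))
  set s : E := ι 1 with hs
  have hs_ne : s ≠ 0 := fun hs0 =>
    one_ne_zero (hι (by rw [← hs, hs0, map_zero] : ι 1 = ι 0))
  have hs_ann : ∀ a ∈ maximalIdeal R, a • s = 0 := by
    intro a ha
    rw [hs, ← map_smul]
    have h1 : a • (1 : ResidueField R) = 0 := by
      show a • (Submodule.Quotient.mk (1 : R) : R ⧸ maximalIdeal R) = 0
      rw [← Submodule.Quotient.mk_smul, Submodule.Quotient.mk_eq_zero]
      simpa using ha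
    rw [h1, map_zero]
  have hs_mem : ∀ N : Submodule R E, N ≠ ⊥ → s ∈ N := by
    intro N hN
    obtain ⟨y, hy0, hyN, ⟨w, hw⟩⟩ := hess N hN
    have hw0 : w ≠ 0 := fun h0 => hy0 (by rw [← hw, h0, map_zero])
    obtain ⟨c, hc⟩ := residue_surjective (R := R) (w⁻¹ : ResidueField R)
    have hcw : c • w = 1 := by
      obtain ⟨cw, rfl⟩ := residue_surjective (R := R) w
      calc c • (residue R cw)
          = residue R (c * cw) := by
            show c • (Submodule.Quotient.mk cw : R ⧸ maximalIdeal R) =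
              (Submodule.Quotient.mk (c * cw) : R ⧸ maximalIdeal R)
            rw [← Submodule.Quotient.mk_smul, smul_eq_mul]
        _ = residue R c * residue R cw := (map_mul _ _ _)
        _ = 1 := by rw [hc]; exact inv_mul_cancel₀ hw0
    have h1 : s = c • y := by rw [hs, ← hw, ← map_smul, hcw]
    rw [h1]
    exact N.smul_mem c hyN
  have st : St16Setup R E := ⟨hinj, hsmall, s, hs_ne, hs_ann, hs_mem⟩
  constructor
  · intro hstab
    exact ⟨annIn L E, fun x hx a ha => hx a (hL ha), hstab, (st.ann_annIn L).symm⟩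
  · rintro ⟨M, hMI, hMT, hLM⟩
    have hME : annIn L E = M := by rw [hLM]; exact st.sub_matlis hcomp M
    intro x hx
    rw [hME] at hx ⊢
    exact hMT x hx

end Aux



/-- Assume `R` is complete and `E_S = Ann_E I` (with `T` acting as the
restriction of `u • φ`) is `T`-torsion-free.  Then an ideal `L ⊆ R` containing `I` is an
`E_S`-ideal (i.e. `Ann_{E_S} L` is `T`-stable) if and only if `L S` is an `E_S`-special
ideal, i.e. `L` is the annihilator of some `T`-stable submodule of `E_S`. -/
theorem stmt16 {R : Type*} [CommRing R] [IsLocalRing R] [IsNoetherianRing R]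
    (p : ℕ) [Fact p.Prime] [CharP R p]
    (hreg : IsRegularLocal R) (hcomp : IsAdicComplete (maximalIdeal R) R)
    (E : Type*) [AddCommGroup E] [Module R E]
    (hE : IsInjectiveHullOfResidueField R E)
    (φ : FrobeniusMap R E p) (hφ : IsNaturalFrobenius p E φ)
    (I : Ideal R) (u : R) (hu : u ∈ Submodule.colon (Ideal.frobPow p I) I)
    (htf : ∀ x ∈ annIn I E, (∃ m, (fun y => u • φ.toFun y)^[m] x = 0) → x = 0)
    (L : Ideal R) (hL : I ≤ L) :
    (∀ x ∈ annIn L E, u • φ.toFun x ∈ annIn L E) ↔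
      ∃ M : Submodule R E, M ≤ annIn I E ∧ (∀ x ∈ M, u • φ.toFun x ∈ M) ∧
        L = M.annihilator := by
  have hfaith : ∀ r : R, (∀ x : E, r • x = 0) → r = 0 := by
    obtain ⟨u₀, hu₀, huniq⟩ := hφ 1 le_rfl
      ⟨fun _ => 0, fun x y => by simp, fun r x => by simp⟩
    intro r hr
    have h1 := huniq r (fun x => by
      show (0 : E) = r • (φ.toFun)^[1] x
      rw [hr])
    have h2 := huniq 0 (fun x => by
      show (0 : E) = (0 : R) • (φ.toFun)^[1] x
      rw [zero_smul])
    exact h1.trans h2.symm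
  exact st16_main hcomp hE hfaith (fun y => u • φ.toFun y) I L hL
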